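/- The pair (c_0, c_0) fails the weak minimizing property: the operator T ∈ L(c_0) defined by T = 2 e*_1 ⊗ e_1 + Σ_{i≥2} (1 + 1/i) e*_i ⊗ e_i satisfies m(T) = 1 and does not attain its minimum modulus, while the sequence ((1/2)e_1 + e_n)_n is a non-weakly null minimizing sequence for T. -/

import Mathlib

open Filter Topology

noncomputable def minMod {X Y : Type*} [NormedAddCommGroup X] [NormedSpace ℝ X]
    [NormedAddCommGroup Y] [NormedSpace ℝ Y] (T : X →L[ℝ] Y) : ℝ :=
  sInf {r : ℝ | ∃ x : X, ‖x‖ = 1 ∧ ‖T x‖ = r}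

def WeaklyNull {X : Type*} [NormedAddCommGroup X] [NormedSpace ℝ X] (x : ℕ → X) : Prop :=
  ∀ f : X →L[ℝ] ℝ, Tendsto (fun n => f (x n)) atTop (𝓝 0)

def AttainsMinMod {X Y : Type*} [NormedAddCommGroup X] [NormedSpace ℝ X]
    [NormedAddCommGroup Y] [NormedSpace ℝ Y] (T : X →L[ℝ] Y) : Prop :=
  ∃ x : X, ‖x‖ = 1 ∧ ‖T x‖ = minMod T

def PairPropM (X Y : Type*) [NormedAddCommGroup X] [NormedSpace ℝ X]
    [NormedAddCommGroup Y] [NormedSpace ℝ Y] : Prop :=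
  ∀ T : X →L[ℝ] Y, 1 ≤ minMod T →
    ∀ (x : X) (y : Y), ‖x‖ ≤ ‖y‖ → ∀ xs : ℕ → X, WeaklyNull xs →
      limsup (fun n => ‖x + xs n‖) atTop ≤ limsup (fun n => ‖y + T (xs n)‖) atTop

def PairPropO (X Y : Type*) [NormedAddCommGroup X] [NormedSpace ℝ X]
    [NormedAddCommGroup Y] [NormedSpace ℝ Y] : Prop :=
  ∀ T : X →L[ℝ] Y, 1 ≤ minMod T →
    ∀ y : Y, y ≠ 0 → ∀ xs : ℕ → X, WeaklyNull xs →
      limsup (fun n => ‖xs n‖) atTop < limsup (fun n => ‖y + T (xs n)‖) atTop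

def PropertyM (X : Type*) [NormedAddCommGroup X] [NormedSpace ℝ X] : Prop :=
  ∀ x y : X, ‖y‖ ≤ ‖x‖ → ∀ xs : ℕ → X, WeaklyNull xs →
    limsup (fun n => ‖y + xs n‖) atTop ≤ limsup (fun n => ‖x + xs n‖) atTop

def OpialProperty (X : Type*) [NormedAddCommGroup X] [NormedSpace ℝ X] : Prop :=
  ∀ x : X, x ≠ 0 → ∀ xs : ℕ → X, WeaklyNull xs →
    limsup (fun n => ‖xs n‖) atTop < limsup (fun n => ‖x + xs n‖) atTop

def WeakMinimizingProperty (X Y : Type*) [NormedAddCommGroup X] [NormedSpace ℝ X]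
    [NormedAddCommGroup Y] [NormedSpace ℝ Y] : Prop :=
  ∀ T : X →L[ℝ] Y,
    (∃ xs : ℕ → X, (∀ n, ‖xs n‖ = 1) ∧
      Tendsto (fun n => ‖T (xs n)‖) atTop (𝓝 (minMod T)) ∧ ¬ WeaklyNull xs) →
    AttainsMinMod T

open scoped ZeroAtInfty

noncomputable def wt (i : ℕ) : ℝ := if i = 0 then 2 else 1 + 1 / ((i : ℝ) + 1)

lemma wt_ge_one (i : ℕ) : 1 ≤ wt i := by
  unfold wt; split
  · norm_num
  · have : (0:ℝ) < (i:ℝ) + 1 := by positivity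
    have := one_div_pos.2 this
    linarith

lemma wt_pos (i : ℕ) : 0 < wt i := lt_of_lt_of_le one_pos (wt_ge_one i)

lemma wt_le_two (i : ℕ) : wt i ≤ 2 := by
  unfold wt; split
  · exact le_refl _
  · have hi : (1:ℝ) ≤ (i:ℝ) + 1 := by have := Nat.cast_nonneg (α := ℝ) i; linarith
    have : 1 / ((i:ℝ)+1) ≤ 1 := by
      rw [div_le_one (by positivity)]; exact hi
    linarith

lemma c0_le_norm (f : C₀(ℕ, ℝ)) (i : ℕ) : |f i| ≤ ‖f‖ := by
  rw [← ZeroAtInftyContinuousMap.norm_toBCF_eq_norm]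
  exact (Real.norm_eq_abs _) ▸ f.toBCF.norm_coe_le_norm i

lemma c0_norm_le (f : C₀(ℕ, ℝ)) {C : ℝ} (hC : 0 ≤ C) (h : ∀ i, |f i| ≤ C) : ‖f‖ ≤ C := by
  rw [← ZeroAtInftyContinuousMap.norm_toBCF_eq_norm]
  exact (BoundedContinuousFunction.norm_le hC).2 (fun i => (Real.norm_eq_abs _) ▸ h i)

noncomputable def eV (n : ℕ) : C₀(ℕ, ℝ) :=
  { toFun := fun i => if i = n then 1 else 0
    continuous_toFun := continuous_of_discreteTopology
    zero_at_infty' := by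
      rw [cocompact_eq_atTop]
      refine tendsto_nhds_of_eventually_eq ?_
      filter_upwards [eventually_gt_atTop n] with i hi
      simp [Nat.ne_of_gt hi] }

@[simp] lemma eV_apply (n i : ℕ) : eV n i = if i = n then (1:ℝ) else 0 := rfl

lemma eV_norm (n : ℕ) : ‖eV n‖ = 1 := by
  apply le_antisymm
  · apply c0_norm_le _ zero_le_one
    intro i; rw [eV_apply]; split <;> simp
  · have := c0_le_norm (eV n) n
    simpa using this

noncomputable def Tmap : C₀(ℕ, ℝ) →L[ℝ] C₀(ℕ, ℝ) :=
  LinearMap.mkContinuous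
    { toFun := fun x =>
        { toFun := fun i => wt i * x i
          continuous_toFun := continuous_of_discreteTopology
          zero_at_infty' := by
            refine squeeze_zero_norm (a := fun i => 2 * ‖x i‖) (fun i => ?_) ?_
            · show ‖wt i * x i‖ ≤ 2 * ‖x i‖
              rw [norm_mul]
              have : ‖wt i‖ ≤ 2 := by
                rw [Real.norm_eq_abs, abs_of_pos (wt_pos i)]; exact wt_le_two i
              exact mul_le_mul_of_nonneg_right this (norm_nonneg _)
            · have h := (zero_at_infty x).norm.const_mul (2:ℝ)
              simpa using h }
      map_add' := fun x y => by ext i; simp [mul_add]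
      map_smul' := fun c x => by
        ext i
        simp [ZeroAtInftyContinuousMap.coe_smul, smul_eq_mul]
        ring }
    2 (fun x => by
      apply c0_norm_le _ (by positivity)
      intro i
      show |wt i * x i| ≤ 2 * ‖x‖
      rw [abs_mul, abs_of_pos (wt_pos i)]
      exact mul_le_mul (wt_le_two i) (c0_le_norm x i) (abs_nonneg _) (by norm_num))

@[simp] lemma Tmap_apply (x : C₀(ℕ, ℝ)) (i : ℕ) : Tmap x i = wt i * x i := rfl

lemma one_lt_wt (i : ℕ) : 1 < wt i := by
  unfold wt; split
  · norm_num
  · have : (0:ℝ) < (i:ℝ) + 1 := by positivity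
    have := one_div_pos.2 this
    linarith

lemma wt_antitone : Antitone wt := by
  intro i j hij
  rcases Nat.eq_zero_or_pos i with hi | hi
  · subst hi
    calc wt j ≤ 2 := wt_le_two j
    _ = wt 0 := by simp [wt]
  · have hj : j ≠ 0 := by omega
    rw [wt, wt, if_neg hj, if_neg (by omega : ¬ i = 0)]
    have h1 : (0:ℝ) < (i:ℝ) + 1 := by positivity
    have h2 : ((i:ℝ)+1) ≤ ((j:ℝ)+1) := by
      have : (i:ℝ) ≤ (j:ℝ) := Nat.cast_le.2 hij
      linarith
    have := one_div_le_one_div_of_le h1 h2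
    linarith

lemma norm_lt_one {x : C₀(ℕ, ℝ)} (h : ∀ i, wt i * |x i| ≤ 1) : ‖x‖ < 1 := by
  have hx := zero_at_infty x
  rw [cocompact_eq_atTop] at hx
  obtain ⟨N, hN⟩ := (Metric.tendsto_atTop.1 hx) (1/2) (by norm_num)
  set c : ℝ := max (1/2) (wt N)⁻¹ with hc
  have hc1 : c < 1 := by
    apply max_lt (by norm_num)
    rw [inv_lt_one_iff₀]; right; exact one_lt_wt N
  have hc0 : 0 ≤ c := le_trans (by norm_num) (le_max_left _ _)
  refine lt_of_le_of_lt (c0_norm_le x hc0 fun i => ?_) hc1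
  rcases le_or_gt N i with hi | hi
  · have := hN i hi
    rw [Real.dist_eq, sub_zero] at this
    exact le_trans this.le (le_max_left _ _)
  · have h1 : |x i| ≤ (wt i)⁻¹ := by
      rw [← one_div, le_div_iff₀ (wt_pos i), mul_comm]; exact h i
    have h2 : (wt i)⁻¹ ≤ (wt N)⁻¹ := by
      exact inv_anti₀ (wt_pos N) (wt_antitone hi.le)
    exact le_trans (le_trans h1 h2) (le_max_right _ _)


lemma norm_Tmap_eV (n : ℕ) : ‖Tmap (eV n)‖ = wt n := by
  apply le_antisymm
  · apply c0_norm_le _ (wt_pos n).le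
    intro i
    show |wt i * eV n i| ≤ wt n
    rw [eV_apply]
    split
    · rename_i hh; subst hh; rw [mul_one, abs_of_pos (wt_pos _)]
    · simp [(wt_pos n).le]
  · have := c0_le_norm (Tmap (eV n)) n
    rw [Tmap_apply, eV_apply, if_pos rfl, mul_one, abs_of_pos (wt_pos _)] at this
    exact this

lemma norm_le_norm_Tmap (x : C₀(ℕ, ℝ)) : ‖x‖ ≤ ‖Tmap x‖ := by
  apply c0_norm_le _ (norm_nonneg _)
  intro i
  have h1 : |x i| ≤ wt i * |x i| := by
    nlinarith [wt_ge_one i, abs_nonneg (x i)]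
  have h2 : |wt i * x i| ≤ ‖Tmap x‖ := by
    have := c0_le_norm (Tmap x) i
    rwa [Tmap_apply] at this
  rw [abs_mul, abs_of_pos (wt_pos i)] at h2
  exact le_trans h1 h2

lemma wt_tendsto : Tendsto wt atTop (𝓝 1) := by
  have h1 : Tendsto (fun n : ℕ => 1 + 1 / ((n:ℝ) + 1)) atTop (𝓝 1) := by
    have := tendsto_one_div_add_atTop_nhds_zero_nat (𝕜 := ℝ)
    have h := this.const_add (1:ℝ)
    simpa using h
  apply h1.congr'
  filter_upwards [eventually_gt_atTop 0] with n hn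
  rw [wt, if_neg (by omega)]

lemma minMod_Tmap : minMod Tmap = 1 := by
  have hne : ∃ r, r ∈ {r : ℝ | ∃ x : C₀(ℕ,ℝ), ‖x‖ = 1 ∧ ‖Tmap x‖ = r} :=
    ⟨wt 0, eV 0, eV_norm 0, norm_Tmap_eV 0⟩
  have hbdd : BddBelow {r : ℝ | ∃ x : C₀(ℕ,ℝ), ‖x‖ = 1 ∧ ‖Tmap x‖ = r} := by
    refine ⟨0, fun r hr => ?_⟩
    obtain ⟨x, _, rfl⟩ := hr
    exact norm_nonneg _
  apply le_antisymm
  · refine ge_of_tendsto wt_tendsto (Eventually.of_forall fun n => ?_)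
    exact csInf_le hbdd ⟨eV n, eV_norm n, norm_Tmap_eV n⟩
  · apply le_csInf hne
    intro r hr
    obtain ⟨x, hx1, rfl⟩ := hr
    calc (1:ℝ) = ‖x‖ := hx1.symm
    _ ≤ ‖Tmap x‖ := norm_le_norm_Tmap x

lemma not_attains : ¬ ∃ x : C₀(ℕ,ℝ), ‖x‖ = 1 ∧ ‖Tmap x‖ = minMod Tmap := by
  rintro ⟨x, hx1, hx2⟩
  rw [minMod_Tmap] at hx2
  have : ‖x‖ < 1 := by
    apply norm_lt_one
    intro i
    have := c0_le_norm (Tmap x) i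
    rw [Tmap_apply, hx2, abs_mul, abs_of_pos (wt_pos i)] at this
    exact this
  linarith [hx1 ▸ this]

lemma xs_apply (n i : ℕ) :
    ((1/2 : ℝ) • eV 0 + eV (n+1)) i =
      (if i = 0 then (1/2:ℝ) else 0) + (if i = n+1 then 1 else 0) := by
  rw [ZeroAtInftyContinuousMap.add_apply, ZeroAtInftyContinuousMap.smul_apply]
  rw [eV_apply, eV_apply, smul_eq_mul]
  split <;> split <;> norm_num

lemma xs_norm (n : ℕ) : ‖(1/2 : ℝ) • eV 0 + eV (n+1)‖ = 1 := by
  apply le_antisymm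
  · apply c0_norm_le _ zero_le_one
    intro i
    rw [xs_apply]
    rcases eq_or_ne i 0 with h0 | h0 <;> rcases eq_or_ne i (n+1) with h1 | h1 <;>
      simp [h0, h1] <;> norm_num
  · have := c0_le_norm ((1/2 : ℝ) • eV 0 + eV (n+1)) (n+1)
    rw [xs_apply, if_neg (by omega), if_pos rfl] at this
    simpa using this

lemma T_xs_norm (n : ℕ) : ‖Tmap ((1/2 : ℝ) • eV 0 + eV (n+1))‖ = 1 + 1 / ((n:ℝ) + 2) := by
  have hw : wt (n+1) = 1 + 1 / ((n:ℝ) + 2) := by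
    rw [wt, if_neg (by omega)]
    push_cast
    ring_nf
  have hpos : (0:ℝ) < 1 + 1 / ((n:ℝ) + 2) := by positivity
  apply le_antisymm
  · apply c0_norm_le _ hpos.le
    intro i
    rw [Tmap_apply, xs_apply]
    rcases eq_or_ne i 0 with h0 | h0
    · subst h0
      rw [if_pos rfl, if_neg (by omega)]
      have : wt 0 = 2 := by simp [wt]
      rw [this]
      have h2 : (0:ℝ) ≤ 1 / ((n:ℝ) + 2) := by positivity
      rw [abs_of_nonneg (by norm_num : (0:ℝ) ≤ 2 * (1/2 + 0))]
      linarith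
    · rw [if_neg h0]
      rcases eq_or_ne i (n+1) with h1 | h1
      · subst h1
        rw [if_pos rfl, hw]
        rw [abs_of_nonneg (by positivity : (0:ℝ) ≤ (1 + 1/((n:ℝ)+2)) * (0 + 1))]
        linarith
      · rw [if_neg h1]
        simpa using hpos.le
  · have := c0_le_norm (Tmap ((1/2 : ℝ) • eV 0 + eV (n+1))) (n+1)
    rw [Tmap_apply, xs_apply, if_neg (by omega), if_pos rfl, hw] at this
    rw [abs_of_nonneg (by positivity : (0:ℝ) ≤ (1 + 1/((n:ℝ)+2)) * (0 + 1))] at this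
    linarith

lemma T_xs_tendsto :
    Tendsto (fun n => ‖Tmap ((1/2 : ℝ) • eV 0 + eV (n+1))‖) atTop (𝓝 1) := by
  have h1 : Tendsto (fun n : ℕ => 1 + 1 / ((n:ℝ) + 2)) atTop (𝓝 1) := by
    have h0 : Tendsto (fun n : ℕ => 1 / ((n:ℝ) + 2)) atTop (𝓝 0) := by
      refine (tendsto_one_div_add_atTop_nhds_zero_nat.comp (tendsto_add_atTop_nat 1)).congr fun n => ?_
      show 1 / ((((n + 1 : ℕ)):ℝ) + 1) = 1 / ((n:ℝ) + 2)
      push_cast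
      ring_nf
    have := h0.const_add (1:ℝ)
    simpa using this
  exact h1.congr fun n => (T_xs_norm n).symm

noncomputable def ev0 : C₀(ℕ, ℝ) →L[ℝ] ℝ :=
  LinearMap.mkContinuous
    { toFun := fun x => x 0
      map_add' := fun x y => rfl
      map_smul' := fun c x => rfl }
    1 (fun x => by
      simpa using c0_le_norm x 0)

lemma not_weakly_null :
    ¬ (∀ f : C₀(ℕ,ℝ) →L[ℝ] ℝ,
        Tendsto (fun n => f ((1/2 : ℝ) • eV 0 + eV (n+1))) atTop (𝓝 0)) := by
  intro h
  have h1 := h ev0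
  have h2 : (fun n : ℕ => ev0 ((1/2 : ℝ) • eV 0 + eV (n+1))) = fun _ => (1/2 : ℝ) := by
    funext n
    show ((1/2 : ℝ) • eV 0 + eV (n+1)) 0 = 1/2
    rw [xs_apply, if_pos rfl, if_neg (by omega)]
    norm_num
  rw [h2] at h1
  have := tendsto_nhds_unique h1 tendsto_const_nhds
  norm_num at this

theorem stmt14 :
    ∃ (T : C₀(ℕ, ℝ) →L[ℝ] C₀(ℕ, ℝ)) (e : ℕ → C₀(ℕ, ℝ)),
      (∀ n i : ℕ, e n i = if i = n then (1 : ℝ) else 0) ∧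
      (∀ (x : C₀(ℕ, ℝ)) (i : ℕ),
        T x i = (if i = 0 then (2 : ℝ) else 1 + 1 / ((i : ℝ) + 1)) * x i) ∧
      minMod T = 1 ∧
      ¬ AttainsMinMod T ∧
      (∀ n : ℕ, ‖(1/2 : ℝ) • e 0 + e (n + 1)‖ = 1) ∧
      Tendsto (fun n => ‖T ((1/2 : ℝ) • e 0 + e (n + 1))‖) atTop (𝓝 (minMod T)) ∧
      ¬ WeaklyNull (fun n => (1/2 : ℝ) • e 0 + e (n + 1)) := by
  refine ⟨Tmap, eV, fun n i => rfl, fun x i => ?_, minMod_Tmap, ?_, xs_norm, ?_, ?_⟩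
  · rw [Tmap_apply]; rfl
  · exact not_attains
  · rw [minMod_Tmap]; exact T_xs_tendsto
  · exact not_weakly_null
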